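/- The map $\sigma \mapsto S(\sigma)$ is a bijection between $d$-separable permutations of size $n$ and rooted plane trees with $n$ leaves in which every internal vertex is labeled by a sign sequence in $\{\pm1\}^{d-1}$, has at least two children, and has a sign sequence different from that of its parent (when the parent exists). -/

import Mathlib

/-- A `(d+1)`-dimensional permutation of size `n`. -/
def IsDPerm {d n : ℕ} (σ : Fin n → Fin d → Fin n) : Prop :=
  ∀ j : Fin d, Function.Bijective fun i => σ i j

/-- The block sum `σ₁ ⊕ₛ σ₂` with sign sequence `s : Fin d → Bool` (`true` = `+1`). -/
def blockSum {d n₁ n₂ : ℕ} (σ₁ : Fin n₁ → Fin d → Fin n₁) (σ₂ : Fin n₂ → Fin d → Fin n₂)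
    (s : Fin d → Bool) : Fin (n₁ + n₂) → Fin d → Fin (n₁ + n₂) :=
  fun i j => Fin.addCases
    (fun i₁ => if s j then Fin.castAdd n₂ (σ₁ i₁ j) else Fin.addNat (σ₁ i₁ j) n₂)
    (fun i₂ => if s j then Fin.natAdd n₁ (σ₂ i₂ j)
      else Fin.castLE (Nat.le_add_left n₂ n₁) (σ₂ i₂ j)) i

/-- `(d+1)`-separable permutations. -/
inductive IsSep (d : ℕ) : (n : ℕ) → (Fin n → Fin d → Fin n) → Prop
  | single (σ : Fin 1 → Fin d → Fin 1) : IsSep d 1 σ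
  | sum {n₁ n₂ : ℕ} (σ₁ : Fin n₁ → Fin d → Fin n₁) (σ₂ : Fin n₂ → Fin d → Fin n₂)
      (s : Fin d → Bool) : IsSep d n₁ σ₁ → IsSep d n₂ σ₂ →
      IsSep d (n₁ + n₂) (blockSum σ₁ σ₂ s)

/-- Rooted plane trees whose internal vertices carry a sign sequence in `{±1}^d`
(`Fin d → Bool`) and an ordered list of subtrees. -/
inductive SignTree (d : ℕ) : Type
  | leaf : SignTree d
  | node : (Fin d → Bool) → List (SignTree d) → SignTree d

mutual
  /-- Number of leaves of a sign tree. -/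
  def numLeaves {d : ℕ} : SignTree d → ℕ
    | .leaf => 1
    | .node _ ts => numLeavesList ts
  def numLeavesList {d : ℕ} : List (SignTree d) → ℕ
    | [] => 0
    | t :: ts => numLeaves t + numLeavesList ts
end

mutual
  /-- The inverse map `S⁻¹`: the `(d+1)`-dimensional permutation encoded by a sign tree,
  obtained by block-summing the permutations of the subtrees at each internal vertex with
  its sign sequence. -/
  def treePerm {d : ℕ} : SignTree d → (n : ℕ) × (Fin n → Fin d → Fin n)
    | .leaf => ⟨1, fun _ _ => 0⟩
    | .node s ts => treePermList s ts
  def treePermList {d : ℕ} (s : Fin d → Bool) :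
      List (SignTree d) → (n : ℕ) × (Fin n → Fin d → Fin n)
    | [] => ⟨0, fun i _ => i⟩
    | t :: ts => ⟨(treePerm t).1 + (treePermList s ts).1,
        blockSum (treePerm t).2 (treePermList s ts).2 s⟩
end

mutual
  /-- Validity of a sign tree below a parent labeled `par` (`none` for the root): every
  internal vertex has at least two children and a sign sequence different from that of
  its parent. -/
  def ValidSign {d : ℕ} : Option (Fin d → Bool) → SignTree d → Prop
    | _, .leaf => True
    | par, .node s ts => 2 ≤ ts.length ∧ par ≠ some s ∧ ValidSignList (some s) ts
  def ValidSignList {d : ℕ} : Option (Fin d → Bool) → List (SignTree d) → Prop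
    | _, [] => True
    | par, t :: ts => ValidSign par t ∧ ValidSignList par ts
end

section Aux
variable {d : ℕ}

/-- value of a block sum in the lower block -/
lemma blockSum_val_lt {n₁ n₂ : ℕ} (f : Fin n₁ → Fin d → Fin n₁) (g : Fin n₂ → Fin d → Fin n₂)
    (s : Fin d → Bool) (i : Fin (n₁ + n₂)) (j : Fin d) (i₁ : Fin n₁) (hi : (i : ℕ) = (i₁ : ℕ)) :
    ((blockSum f g s i j : Fin (n₁ + n₂)) : ℕ) =
      if s j then ((f i₁ j : ℕ)) else (f i₁ j : ℕ) + n₂ := by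
  have : i = Fin.castAdd n₂ i₁ := Fin.ext (by simpa using hi)
  subst this
  simp only [blockSum, Fin.addCases_left]
  cases s j <;> simp

/-- value of a block sum in the upper block -/
lemma blockSum_val_ge {n₁ n₂ : ℕ} (f : Fin n₁ → Fin d → Fin n₁) (g : Fin n₂ → Fin d → Fin n₂)
    (s : Fin d → Bool) (i : Fin (n₁ + n₂)) (j : Fin d) (i₂ : Fin n₂) (hi : (i : ℕ) = n₁ + (i₂ : ℕ)) :
    ((blockSum f g s i j : Fin (n₁ + n₂)) : ℕ) =
      if s j then n₁ + (g i₂ j : ℕ) else (g i₂ j : ℕ) := by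
  have : i = Fin.natAdd n₁ i₂ := Fin.ext (by simpa using hi)
  subst this
  simp only [blockSum, Fin.addCases_right]
  cases s j <;> simp

end Aux
/-- `k` is an `s`-split point of `σ`. -/
def SplitP {d n : ℕ} (σ : Fin n → Fin d → Fin n) (s : Fin d → Bool) (k : ℕ) : Prop :=
  ∀ (i : Fin n) (j : Fin d),
    ((i : ℕ) < k ↔ if s j then ((σ i j : ℕ) < k) else n ≤ (σ i j : ℕ) + k)

section Aux2
variable {d : ℕ}

lemma splitP_blockSum {n₁ n₂ : ℕ} (f : Fin n₁ → Fin d → Fin n₁) (g : Fin n₂ → Fin d → Fin n₂)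
    (s : Fin d → Bool) : SplitP (blockSum f g s) s n₁ := by
  intro i j
  rcases Nat.lt_or_ge (i : ℕ) n₁ with h | h
  · rw [blockSum_val_lt f g s i j ⟨(i : ℕ), h⟩ rfl]
    have hlt := (f ⟨(i : ℕ), h⟩ j).isLt
    split_ifs <;> omega
  · have h2 : (i : ℕ) - n₁ < n₂ := by have := i.isLt; omega
    rw [blockSum_val_ge f g s i j ⟨(i : ℕ) - n₁, h2⟩
      (show (i : ℕ) = n₁ + ((i : ℕ) - n₁) by omega)]
    have hlt := (g ⟨(i : ℕ) - n₁, h2⟩ j).isLt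
    split_ifs <;> omega

lemma splitP_left {n₁ n₂ : ℕ} {f : Fin n₁ → Fin d → Fin n₁} {g : Fin n₂ → Fin d → Fin n₂}
    {s : Fin d → Bool} {k : ℕ} (_hk : k ≤ n₁) (h : SplitP (blockSum f g s) s k) :
    SplitP f s k := by
  intro i j
  have hi : ((Fin.castAdd n₂ i : Fin (n₁ + n₂)) : ℕ) = (i : ℕ) := by simp
  have hh := h (Fin.castAdd n₂ i) j
  rw [blockSum_val_lt f g s _ j i hi, hi] at hh
  have hlt := (f i j).isLt
  split_ifs at hh ⊢ <;> omega

/-- A permutation cannot have split points with two different sign sequences. -/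
lemma splitP_sign_unique {n : ℕ} {σ : Fin n → Fin d → Fin n} {s t : Fin d → Bool} {k m : ℕ}
    (hs : SplitP σ s k) (ht : SplitP σ t m)
    (hk0 : 0 < k) (hkn : k < n) (hm0 : 0 < m) (hmn : m < n) : s = t := by
  by_contra hne
  have hex : ∃ j, s j ≠ t j := by
    by_contra hall
    push_neg at hall
    exact hne (funext hall)
  obtain ⟨j, hj⟩ := hex
  have dir : ∀ (u : Fin d → Bool) (c : ℕ), SplitP σ u c → u j = true →
      ∀ i : Fin n, ((i : ℕ) < c ↔ (σ i j : ℕ) < c) := by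
    intro u c hu huj i
    have := hu i j
    rw [huj] at this
    simpa using this
  have skew : ∀ (u : Fin d → Bool) (c : ℕ), SplitP σ u c → u j = false →
      ∀ i : Fin n, ((i : ℕ) < c ↔ n ≤ (σ i j : ℕ) + c) := by
    intro u c hu huj i
    have := hu i j
    rw [huj] at this
    simpa using this
  have key : ∀ (k m : ℕ), 0 < k → k < n → 0 < m → m < n →
      (∀ i : Fin n, (i : ℕ) < k ↔ (σ i j : ℕ) < k) →
      (∀ i : Fin n, (i : ℕ) < m ↔ n ≤ (σ i j : ℕ) + m) → False := by
    intro k m hk0 hkn hm0 hmn hd hsk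
    rcases le_or_gt (k + m) n with hc | hc
    · obtain ⟨i, hi⟩ : ∃ i : Fin n, (i : ℕ) = 0 := ⟨⟨0, by omega⟩, rfl⟩
      have h1 := hd i; have h2 := hsk i
      rw [hi] at h1 h2
      omega
    · obtain ⟨i, hi⟩ : ∃ i : Fin n, (i : ℕ) = n - 1 := ⟨⟨n - 1, by omega⟩, rfl⟩
      have h1 := hd i; have h2 := hsk i
      rw [hi] at h1 h2
      omega
  cases hcs : s j <;> cases hct : t j
  · exact hj (by rw [hcs, hct])
  · exact key m k hm0 hmn hk0 hkn (dir t m ht hct) (skew s k hs hcs)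
  · exact key k m hk0 hkn hm0 hmn (dir s k hs hcs) (skew t m ht hct)
  · exact hj (by rw [hcs, hct])

end Aux2
section Aux3
variable {d : ℕ}

/-- Abbreviation for the sigma type of sized permutations. -/
abbrev PermS (d : ℕ) := (m : ℕ) × (Fin m → Fin d → Fin m)

lemma sigma_ext {n m : ℕ} {f : Fin n → Fin d → Fin n} {g : Fin m → Fin d → Fin m}
    (h : n = m) (hv : ∀ (i : Fin n) (j : Fin d), ((f i j : ℕ)) = ((g (Fin.cast h i) j : ℕ))) :
    (⟨n, f⟩ : PermS d) = ⟨m, g⟩ := by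
  subst h
  have : f = g := by
    funext i j
    exact Fin.ext (hv i j)
  rw [this]

/-- A block sum with an empty second part is the first part. -/
lemma blockSum_zero {n : ℕ} (f : Fin n → Fin d → Fin n) (g : Fin 0 → Fin d → Fin 0)
    (s : Fin d → Bool) : blockSum f g s = f := by
  funext i j
  apply Fin.ext
  have h : (i : ℕ) < n := i.isLt
  rw [blockSum_val_lt f g s i j ⟨(i : ℕ), h⟩ rfl]
  have : (⟨(i : ℕ), h⟩ : Fin n) = i := rfl
  rw [this]
  split_ifs <;> omega

/-- The two halves of a block sum are determined. -/
lemma blockSum_halves {n₁ n₂ : ℕ} {f f' : Fin n₁ → Fin d → Fin n₁}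
    {g g' : Fin n₂ → Fin d → Fin n₂} {s : Fin d → Bool}
    (h : blockSum f g s = blockSum f' g' s) : f = f' ∧ g = g' := by
  constructor
  · funext i j
    have hv := congrArg (fun σ => ((σ (Fin.castAdd n₂ i) j : Fin (n₁ + n₂)) : ℕ)) h
    have hi : ((Fin.castAdd n₂ i : Fin (n₁ + n₂)) : ℕ) = (i : ℕ) := by simp
    rw [blockSum_val_lt f g s _ j i hi, blockSum_val_lt f' g' s _ j i hi] at hv
    apply Fin.ext
    split_ifs at hv <;> omega
  · funext i j
    have hv := congrArg (fun σ => ((σ (Fin.natAdd n₁ i) j : Fin (n₁ + n₂)) : ℕ)) h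
    have hi : ((Fin.natAdd n₁ i : Fin (n₁ + n₂)) : ℕ) = n₁ + (i : ℕ) := by simp
    rw [blockSum_val_ge f g s _ j i hi, blockSum_val_ge f' g' s _ j i hi] at hv
    apply Fin.ext
    split_ifs at hv <;> omega

/-- From an equality of block sums with matching first sizes, the parts agree. -/
lemma blockSum_sigma_halves {a b a' b' : ℕ} {A : Fin a → Fin d → Fin a}
    {B : Fin b → Fin d → Fin b} {A' : Fin a' → Fin d → Fin a'} {B' : Fin b' → Fin d → Fin b'}
    {s : Fin d → Bool} (ha : a = a')
    (h : (⟨a + b, blockSum A B s⟩ : PermS d) = ⟨a' + b', blockSum A' B' s⟩) :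
    (⟨a, A⟩ : PermS d) = ⟨a', A'⟩ ∧ (⟨b, B⟩ : PermS d) = ⟨b', B'⟩ := by
  subst ha
  have hn : a + b = a + b' := congrArg Sigma.fst h
  have hb : b = b' := by omega
  subst hb
  have h2 : blockSum A B s = blockSum A' B' s := by
    have := (Sigma.mk.inj_iff.mp h)
    exact eq_of_heq this.2
  obtain ⟨h3, h4⟩ := blockSum_halves h2
  exact ⟨by rw [h3], by rw [h4]⟩

end Aux3
section Aux4
variable {d : ℕ}

mutual
  theorem size_eq_numLeaves (T : SignTree d) : (treePerm T).1 = numLeaves T := by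
    cases T with
    | leaf => rfl
    | node s ts => exact sizeList_eq_numLeaves s ts
  theorem sizeList_eq_numLeaves (s : Fin d → Bool) (ts : List (SignTree d)) :
      (treePermList s ts).1 = numLeavesList ts := by
    cases ts with
    | nil => rfl
    | cons t ts =>
        show (treePerm t).1 + (treePermList s ts).1 = numLeaves t + numLeavesList ts
        rw [size_eq_numLeaves t, sizeList_eq_numLeaves s ts]
end

mutual
  theorem size_pos {par : Option (Fin d → Bool)} {T : SignTree d} (h : ValidSign par T) :
      1 ≤ (treePerm T).1 := by
    cases T with
    | leaf => exact le_refl 1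
    | node s ts =>
        obtain ⟨hlen, -, hts⟩ := h
        cases ts with
        | nil => simp at hlen
        | cons t ts =>
            have := size_pos hts.1
            show 1 ≤ (treePerm t).1 + (treePermList s ts).1
            omega
  theorem sizeList_pos {par : Option (Fin d → Bool)} {s : Fin d → Bool}
      {ts : List (SignTree d)} (h : ValidSignList par ts) :
      ts.length ≤ (treePermList s ts).1 := by
    cases ts with
    | nil => exact Nat.zero_le _
    | cons t ts =>
        have h1 := size_pos h.1
        have h2 := sizeList_pos (s := s) h.2
        show ts.length + 1 ≤ (treePerm t).1 + (treePermList s ts).1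
        omega
end

mutual
  theorem sep_treePerm {par : Option (Fin d → Bool)} {T : SignTree d} (h : ValidSign par T) :
      IsSep d (treePerm T).1 (treePerm T).2 := by
    cases T with
    | leaf => exact IsSep.single _
    | node s ts =>
        obtain ⟨hlen, -, hts⟩ := h
        have hne : ts ≠ [] := by
          cases ts
          · simp at hlen
          · simp
        exact sep_treePermList s hts hne
  theorem sep_treePermList (s : Fin d → Bool) {ts : List (SignTree d)}
      (h : ValidSignList (some s) ts) (hne : ts ≠ []) :
      IsSep d (treePermList s ts).1 (treePermList s ts).2 := by
    cases ts with
    | nil => exact absurd rfl hne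
    | cons t ts =>
        have h1 := sep_treePerm h.1
        cases ts with
        | nil =>
            show IsSep d ((treePerm t).1 + 0) (blockSum (treePerm t).2 (treePermList s []).2 s)
            have e : blockSum (treePerm t).2 (treePermList s []).2 s = (treePerm t).2 :=
              blockSum_zero _ _ s
            refine (congrArg (IsSep d ((treePerm t).1 + 0)) e).mpr ?_
            exact h1
        | cons u us =>
            exact IsSep.sum _ _ s h1 (sep_treePermList s h.2 (by simp))
end

end Aux4
section Aux5
variable {d : ℕ}

/-- A valid subtree below a node labeled `s` has no `s`-split point. -/
theorem no_split {s : Fin d → Bool} {t : SignTree d} (h : ValidSign (some s) t) {k : ℕ}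
    (hk0 : 0 < k) (hkn : k < (treePerm t).1) : ¬ SplitP (treePerm t).2 s k := by
  cases t with
  | leaf =>
      have : (treePerm (SignTree.leaf : SignTree d)).1 = 1 := rfl
      omega
  | node s' ts =>
      obtain ⟨hlen, hne, hts⟩ := h
      cases ts with
      | nil => simp at hlen
      | cons u us =>
          cases us with
          | nil => simp at hlen
          | cons v vs =>
              intro hsp
              have ha0 : 1 ≤ (treePerm u).1 := size_pos hts.1
              have hb0 : 1 ≤ (treePermList s' (v :: vs)).1 := by
                have := sizeList_pos (s := s') hts.2
                simp at this
                omega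
              have hsp' : SplitP (treePerm (SignTree.node s' (u :: v :: vs))).2 s' (treePerm u).1 :=
                splitP_blockSum (treePerm u).2 (treePermList s' (v :: vs)).2 s'
              have hn : (treePerm (SignTree.node s' (u :: v :: vs))).1
                  = (treePerm u).1 + (treePermList s' (v :: vs)).1 := rfl
              have : s = s' := splitP_sign_unique hsp hsp' hk0 hkn ha0 (by omega)
              exact hne (by rw [this])

mutual
  theorem inj_tree (T T' : SignTree d) {par par' : Option (Fin d → Bool)}
      (h : ValidSign par T) (h' : ValidSign par' T')
      (he : treePerm T = treePerm T') : T = T' := by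
    cases T with
    | leaf =>
        cases T' with
        | leaf => rfl
        | node s' ts' =>
            obtain ⟨hlen, -, hts⟩ := h'
            have h1 : (treePerm (SignTree.leaf : SignTree d)).1 = 1 := rfl
            have h2 : ts'.length ≤ (treePermList s' ts').1 := sizeList_pos hts
            have h3 : (treePerm (SignTree.node s' ts')).1 = (treePermList s' ts').1 := rfl
            have := congrArg Sigma.fst he
            omega
    | node s ts =>
        cases T' with
        | leaf =>
            obtain ⟨hlen, -, hts⟩ := h
            have h1 : (treePerm (SignTree.leaf : SignTree d)).1 = 1 := rfl
            have h2 : ts.length ≤ (treePermList s ts).1 := sizeList_pos hts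
            have h3 : (treePerm (SignTree.node s ts)).1 = (treePermList s ts).1 := rfl
            have := congrArg Sigma.fst he
            omega
        | node s' ts' =>
            obtain ⟨hlen, -, hts⟩ := h
            obtain ⟨hlen', -, hts'⟩ := h'
            -- the sign sequences agree
            have hn := congrArg Sigma.fst he
            have hss : s = s' := by
              cases ts with
              | nil => simp at hlen
              | cons t us =>
              cases us with
              | nil => simp at hlen
              | cons v vs =>
              cases ts' with
              | nil => simp at hlen'
              | cons t' us' =>
              cases us' with
              | nil => simp at hlen'
              | cons v' vs' =>
              have ha0 : 1 ≤ (treePerm t).1 := size_pos hts.1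
              have hb0 : 1 ≤ (treePermList s (v :: vs)).1 := by
                have := sizeList_pos (s := s) hts.2
                simp at this; omega
              have ha0' : 1 ≤ (treePerm t').1 := size_pos hts'.1
              have hb0' : 1 ≤ (treePermList s' (v' :: vs')).1 := by
                have := sizeList_pos (s := s') hts'.2
                simp at this; omega
              have hsp : SplitP (treePerm (SignTree.node s (t :: v :: vs))).2 s (treePerm t).1 :=
                splitP_blockSum _ _ s
              have hsp' : SplitP (treePerm (SignTree.node s' (t' :: v' :: vs'))).2 s'
                  (treePerm t').1 := splitP_blockSum _ _ s'
              rw [← he] at hsp'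
              have e1 : (treePerm (SignTree.node s (t :: v :: vs))).1
                  = (treePerm t).1 + (treePermList s (v :: vs)).1 := rfl
              have e2 : (treePerm (SignTree.node s' (t' :: v' :: vs'))).1
                  = (treePerm t').1 + (treePermList s' (v' :: vs')).1 := rfl
              exact splitP_sign_unique hsp hsp' ha0 (by omega) ha0' (by omega)
            subst hss
            have : ts = ts' := inj_list s ts ts' hts hts' he
            rw [this]

  termination_by sizeOf T

  theorem inj_list (s : Fin d → Bool) (ts ts' : List (SignTree d))
      (h : ValidSignList (some s) ts) (h' : ValidSignList (some s) ts')
      (he : treePermList s ts = treePermList s ts') : ts = ts' := by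
    cases ts with
    | nil =>
        cases ts' with
        | nil => rfl
        | cons t' us' =>
            have h1 : 1 ≤ (treePerm t').1 := size_pos h'.1
            have hn := congrArg Sigma.fst he
            have e0 : (treePermList s ([] : List (SignTree d))).1 = 0 := rfl
            have e1 : (treePermList s (t' :: us')).1
                = (treePerm t').1 + (treePermList s us').1 := rfl
            omega
    | cons t us =>
        cases ts' with
        | nil =>
            have h1 : 1 ≤ (treePerm t).1 := size_pos h.1
            have hn := congrArg Sigma.fst he
            have e0 : (treePermList s ([] : List (SignTree d))).1 = 0 := rfl
            have e1 : (treePermList s (t :: us)).1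
                = (treePerm t).1 + (treePermList s us).1 := rfl
            omega
        | cons t' us' =>
            -- singleton lists are handled through `blockSum_zero`
            have single_eq : ∀ u : SignTree d, treePermList s [u] = treePerm u := by
              intro u
              exact congrArg (Sigma.mk (treePerm u).1) (blockSum_zero (treePerm u).2 _ s)
            cases us with
            | nil =>
                cases us' with
                | nil =>
                    rw [single_eq, single_eq] at he
                    rw [inj_tree t t' h.1 h'.1 he]
                | cons v' vs' =>
                    exfalso
                    have ha0' : 1 ≤ (treePerm t').1 := size_pos h'.1
                    have hb0' : 1 ≤ (treePermList s (v' :: vs')).1 := by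
                      have := sizeList_pos (s := s) h'.2
                      simp at this; omega
                    have hsp' : SplitP (treePermList s (t' :: v' :: vs')).2 s (treePerm t').1 :=
                      splitP_blockSum _ _ s
                    rw [← he, single_eq] at hsp'
                    have hn := congrArg Sigma.fst he
                    have e1 : (treePermList s [t]).1 = (treePerm t).1 + 0 := rfl
                    have e2 : (treePermList s (t' :: v' :: vs')).1
                        = (treePerm t').1 + (treePermList s (v' :: vs')).1 := rfl
                    rw [single_eq] at hn
                    exact no_split h.1 ha0' (by omega) hsp'
            | cons v vs =>
                cases us' with
                | nil =>
                    exfalso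
                    have ha0 : 1 ≤ (treePerm t).1 := size_pos h.1
                    have hb0 : 1 ≤ (treePermList s (v :: vs)).1 := by
                      have := sizeList_pos (s := s) h.2
                      simp at this; omega
                    have hsp : SplitP (treePermList s (t :: v :: vs)).2 s (treePerm t).1 :=
                      splitP_blockSum _ _ s
                    rw [he, single_eq] at hsp
                    have hn := congrArg Sigma.fst he
                    have e1 : (treePermList s [t']).1 = (treePerm t').1 + 0 := rfl
                    have e2 : (treePermList s (t :: v :: vs)).1
                        = (treePerm t).1 + (treePermList s (v :: vs)).1 := rfl
                    rw [single_eq] at hn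
                    exact no_split h'.1 ha0 (by omega) hsp
                | cons v' vs' =>
                    have ha0 : 1 ≤ (treePerm t).1 := size_pos h.1
                    have hb0 : 1 ≤ (treePermList s (v :: vs)).1 := by
                      have := sizeList_pos (s := s) h.2
                      simp at this; omega
                    have ha0' : 1 ≤ (treePerm t').1 := size_pos h'.1
                    have hb0' : 1 ≤ (treePermList s (v' :: vs')).1 := by
                      have := sizeList_pos (s := s) h'.2
                      simp at this; omega
                    have hn := congrArg Sigma.fst he
                    have e1 : (treePermList s (t :: v :: vs)).1
                        = (treePerm t).1 + (treePermList s (v :: vs)).1 := rfl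
                    have e2 : (treePermList s (t' :: v' :: vs')).1
                        = (treePerm t').1 + (treePermList s (v' :: vs')).1 := rfl
                    have hsp : SplitP (treePermList s (t :: v :: vs)).2 s (treePerm t).1 :=
                      splitP_blockSum _ _ s
                    have hsp' : SplitP (treePermList s (t' :: v' :: vs')).2 s (treePerm t').1 :=
                      splitP_blockSum _ _ s
                    have hsp'2 : SplitP (treePermList s (t :: v :: vs)).2 s (treePerm t').1 := by
                      rw [he]; exact hsp'
                    have hsp2 : SplitP (treePermList s (t' :: v' :: vs')).2 s (treePerm t).1 := by
                      rw [← he]; exact hsp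
                    -- minimality on both sides gives equality of the head sizes
                    have hle : (treePerm t).1 ≤ (treePerm t').1 := by
                      by_contra hlt
                      push_neg at hlt
                      exact no_split h.1 ha0' hlt
                        (splitP_left (le_of_lt hlt) hsp'2)
                    have hge : (treePerm t').1 ≤ (treePerm t).1 := by
                      by_contra hlt
                      push_neg at hlt
                      exact no_split h'.1 ha0 hlt
                        (splitP_left (le_of_lt hlt) hsp2)
                    have ha : (treePerm t).1 = (treePerm t').1 := le_antisymm hle hge
                    obtain ⟨hhead, htail⟩ := blockSum_sigma_halves ha he
                    have ht : t = t' := inj_tree t t' h.1 h'.1 hhead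
                    have hus : (v :: vs) = (v' :: vs') :=
                      inj_list s (v :: vs) (v' :: vs') h.2 h'.2 htail
                    rw [ht, hus]
  termination_by sizeOf ts
end

end Aux5
section Aux6
variable {d : ℕ}

lemma treePermList_singleton (s : Fin d → Bool) (u : SignTree d) :
    treePermList s [u] = treePerm u :=
  congrArg (Sigma.mk (treePerm u).1) (blockSum_zero (treePerm u).2 _ s)

/-- Associativity of the block sum. -/
lemma blockSum_assoc {a b c : ℕ} (A : Fin a → Fin d → Fin a) (B : Fin b → Fin d → Fin b)
    (C : Fin c → Fin d → Fin c) (s : Fin d → Bool) :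
    (⟨a + (b + c), blockSum A (blockSum B C s) s⟩ : PermS d)
      = ⟨a + b + c, blockSum (blockSum A B s) C s⟩ := by
  apply sigma_ext (by omega)
  intro i j
  have hic : ((Fin.cast (by omega : a + (b + c) = a + b + c) i : Fin (a + b + c)) : ℕ)
      = (i : ℕ) := rfl
  rcases Nat.lt_or_ge (i : ℕ) a with h1 | h1
  · rw [blockSum_val_lt A (blockSum B C s) s i j ⟨(i : ℕ), h1⟩ rfl]
    rw [blockSum_val_lt (blockSum A B s) C s _ j ⟨(i : ℕ), by omega⟩ hic]
    rw [blockSum_val_lt A B s _ j ⟨(i : ℕ), h1⟩ rfl]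
    split_ifs <;> omega
  · rcases Nat.lt_or_ge (i : ℕ) (a + b) with h2 | h2
    · have hb : (i : ℕ) - a < b + c := by omega
      have hb2 : (i : ℕ) - a < b := by omega
      rw [blockSum_val_ge A (blockSum B C s) s i j ⟨(i : ℕ) - a, hb⟩
        (show (i : ℕ) = a + ((i : ℕ) - a) by omega)]
      rw [blockSum_val_lt (blockSum A B s) C s _ j ⟨(i : ℕ), by omega⟩ hic]
      rw [blockSum_val_lt B C s _ j ⟨(i : ℕ) - a, hb2⟩ rfl]
      rw [blockSum_val_ge A B s _ j ⟨(i : ℕ) - a, hb2⟩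
        (show (i : ℕ) = a + ((i : ℕ) - a) by omega)]
      split_ifs <;> omega
    · have hb : (i : ℕ) - a < b + c := by have := i.isLt; omega
      have hc : (i : ℕ) - (a + b) < c := by have := i.isLt; omega
      rw [blockSum_val_ge A (blockSum B C s) s i j ⟨(i : ℕ) - a, hb⟩
        (show (i : ℕ) = a + ((i : ℕ) - a) by omega)]
      rw [blockSum_val_ge (blockSum A B s) C s _ j ⟨(i : ℕ) - (a + b), hc⟩
        (show (i : ℕ) = (a + b) + ((i : ℕ) - (a + b)) by omega)]
      rw [blockSum_val_ge B C s _ j ⟨(i : ℕ) - (a + b), hc⟩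
        (show (i : ℕ) - a = b + ((i : ℕ) - (a + b)) by omega)]
      split_ifs <;> omega

/-- `treePermList` turns append into block sum. -/
lemma treePermList_append (s : Fin d → Bool) (l₁ l₂ : List (SignTree d)) :
    treePermList s (l₁ ++ l₂) = ⟨(treePermList s l₁).1 + (treePermList s l₂).1,
      blockSum (treePermList s l₁).2 (treePermList s l₂).2 s⟩ := by
  induction l₁ with
  | nil =>
      rw [List.nil_append]
      apply sigma_ext (by exact (Nat.zero_add _).symm : (treePermList s l₂).1 = (treePermList s []).1 + (treePermList s l₂).1)
      intro i j
      have e0 : (treePermList s ([] : List (SignTree d))).1 = 0 := rfl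
      rw [blockSum_val_ge (treePermList s []).2 (treePermList s l₂).2 s
        (Fin.cast (by exact (Nat.zero_add _).symm) i) j i
        (by simp [e0]; rfl)]
      split_ifs <;> omega
  | cons t l₁ ih =>
      show (⟨(treePerm t).1 + (treePermList s (l₁ ++ l₂)).1,
        blockSum (treePerm t).2 (treePermList s (l₁ ++ l₂)).2 s⟩ : PermS d) = _
      rw [ih]
      exact blockSum_assoc (treePerm t).2 (treePermList s l₁).2 (treePermList s l₂).2 s

/-- The list of children used when flattening a tree under sign `s`. -/
def childrenOf (s : Fin d → Bool) : SignTree d → List (SignTree d)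
  | .leaf => [.leaf]
  | .node s' ts => if s' = s then ts else [.node s' ts]

lemma childrenOf_perm (s : Fin d → Bool) (T : SignTree d) :
    treePermList s (childrenOf s T) = treePerm T := by
  cases T with
  | leaf => exact treePermList_singleton s _
  | node s' ts =>
      by_cases h : s' = s
      · subst h
        simp only [childrenOf, if_pos rfl]
        rfl
      · simp only [childrenOf, if_neg h]
        exact treePermList_singleton s _

lemma childrenOf_length {par : Option (Fin d → Bool)} (s : Fin d → Bool) {T : SignTree d}
    (h : ValidSign par T) : 1 ≤ (childrenOf s T).length := by
  cases T with
  | leaf => simp [childrenOf]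
  | node s' ts =>
      by_cases hc : s' = s
      · rw [show childrenOf s (SignTree.node s' ts) = ts from by simp [childrenOf, hc]]
        have := h.1
        omega
      · simp [childrenOf, if_neg hc]

lemma childrenOf_valid (s : Fin d → Bool) {T : SignTree d} (h : ValidSign none T) :
    ValidSignList (some s) (childrenOf s T) := by
  cases T with
  | leaf => exact ⟨trivial, trivial⟩
  | node s' ts =>
      obtain ⟨hlen, -, hts⟩ := h
      by_cases hc : s' = s
      · subst hc
        simpa only [childrenOf, if_pos rfl, if_true] using hts
      · simp only [childrenOf, if_neg hc]
        exact ⟨⟨hlen, fun hx => hc (Option.some.inj hx).symm, hts⟩, trivial⟩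

lemma validSignList_append {par : Option (Fin d → Bool)} {l₁ l₂ : List (SignTree d)}
    (h₁ : ValidSignList par l₁) (h₂ : ValidSignList par l₂) :
    ValidSignList par (l₁ ++ l₂) := by
  induction l₁ with
  | nil => exact h₂
  | cons t l₁ ih => exact ⟨h₁.1, ih h₁.2⟩

/-- Surjectivity: every separable permutation is encoded by a valid sign tree. -/
theorem exists_tree {n : ℕ} {σ : Fin n → Fin d → Fin n} (h : IsSep d n σ) :
    ∃ T : SignTree d, ValidSign none T ∧ treePerm T = ⟨n, σ⟩ := by
  induction h with
  | single σ =>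
      refine ⟨.leaf, trivial, sigma_ext rfl fun i j => ?_⟩
      have h1 : ((0 : Fin 1) : ℕ) = 0 := rfl
      have h2 := (σ (Fin.cast rfl i) j).isLt
      omega
  | sum σ₁ σ₂ s h₁ h₂ ih₁ ih₂ =>
      obtain ⟨T₁, hv₁, he₁⟩ := ih₁
      obtain ⟨T₂, hv₂, he₂⟩ := ih₂
      refine ⟨.node s (childrenOf s T₁ ++ childrenOf s T₂), ?_, ?_⟩
      · refine ⟨?_, by simp, validSignList_append (childrenOf_valid s hv₁)
          (childrenOf_valid s hv₂)⟩
        have l1 := childrenOf_length s hv₁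
        have l2 := childrenOf_length s hv₂
        simp only [List.length_append]
        omega
      · show treePermList s (childrenOf s T₁ ++ childrenOf s T₂) = _
        rw [treePermList_append, childrenOf_perm s T₁, childrenOf_perm s T₂, he₁, he₂]

end Aux6
/-- The encoding of `(d+1)`-separable permutations by sign trees is a bijection: the map
`S⁻¹` is a bijection from sign trees with `n` leaves (internal vertices labeled by sign
sequences, with at least two children, and label different from the parent's) onto
`(d+1)`-separable permutations of size `n`. -/
theorem sign_tree_bijection (d n : ℕ) :
    Set.BijOn (fun T => treePerm T)
      {T : SignTree d | ValidSign none T ∧ numLeaves T = n}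
      {p : (m : ℕ) × (Fin m → Fin d → Fin m) | p.1 = n ∧ IsSep d p.1 p.2} := by
  refine ⟨?_, ?_, ?_⟩
  · rintro T ⟨hv, hL⟩
    refine ⟨?_, sep_treePerm hv⟩
    rw [size_eq_numLeaves, hL]
  · rintro T ⟨hv, -⟩ T' ⟨hv', -⟩ he
    exact inj_tree T T' hv hv' he
  · rintro ⟨m, σ⟩ ⟨hm, hsep⟩
    obtain ⟨T, hv, he⟩ := exists_tree hsep
    refine ⟨T, ⟨hv, ?_⟩, he⟩
    rw [← size_eq_numLeaves, he, ← hm]
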